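/- For the Painlevé II equation with parameter a and y > 0, with A = 12y, B = 0, N = 4, ξ¹ = -24/(5y), ξ² = 0 and I₃ = (2y³ + xy + a)/(30y³), the invariants I₆ = (B·(I₃)_x - A·(I₃)_y)/N and I₉ = (ξ¹·(I₃)_x + ξ²·(I₃)_y)²/N³ satisfy I₆ = (2xy + 3a)/(10y³) and I₉ = 1/(2500y⁶); consequently J = (1/50)·(4 + 10I₆ - 60I₃)/√I₉ = a. -/

import Mathlib

noncomputable def pdx (f : ℝ → ℝ → ℝ) (x y : ℝ) : ℝ := deriv (fun t => f t y) x
noncomputable def pdy (f : ℝ → ℝ → ℝ) (x y : ℝ) : ℝ := deriv (fun t => f x t) y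

/-- for Painlevé II with y > 0, I₆ = (2xy + 3a)/(10y³), I₉ = 1/(2500y⁶),
and J = (1/50)(4 + 10I₆ - 60I₃)/√I₉ = a. -/
theorem stmt12 (a : ℝ) (A B N ξ₁ ξ₂ I₃ I₆ I₉ : ℝ → ℝ → ℝ)
    (hA : ∀ x y, A x y = 12 * y) (hB : ∀ x y, B x y = 0)
    (hN : ∀ x y, N x y = 4)
    (hξ₁ : ∀ x y, ξ₁ x y = -24 / (5 * y)) (hξ₂ : ∀ x y, ξ₂ x y = 0)
    (hI₃ : ∀ x y, I₃ x y = (2 * y ^ 3 + x * y + a) / (30 * y ^ 3))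
    (hI₆ : ∀ x y, I₆ x y = (B x y * pdx I₃ x y - A x y * pdy I₃ x y) / N x y)
    (hI₉ : ∀ x y, I₉ x y = (ξ₁ x y * pdx I₃ x y + ξ₂ x y * pdy I₃ x y) ^ 2 / (N x y) ^ 3) :
    ∀ x y : ℝ, 0 < y →
      I₆ x y = (2 * x * y + 3 * a) / (10 * y ^ 3) ∧
      I₉ x y = 1 / (2500 * y ^ 6) ∧
      (1 / 50) * (4 + 10 * I₆ x y - 60 * I₃ x y) / Real.sqrt (I₉ x y) = a := by

  intro x y hy
  have hy0 : y ≠ 0 := ne_of_gt hy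
  have hpdx : pdx I₃ x y = 1 / (30 * y ^ 2) := by
    have heq : (fun t => I₃ t y) = fun t => (2 * y ^ 3 + t * y + a) / (30 * y ^ 3) := by
      funext t; rw [hI₃]
    rw [pdx, heq]
    have h : HasDerivAt (fun t : ℝ => (2 * y ^ 3 + t * y + a) / (30 * y ^ 3))
        (y / (30 * y ^ 3)) x := by
      have h1 : HasDerivAt (fun t : ℝ => 2 * y ^ 3 + t * y + a) y x := by
        simpa using (((hasDerivAt_id x).mul_const y).const_add (2 * y ^ 3)).add_const a
      exact h1.div_const _
    rw [h.deriv]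
    field_simp
  have hpdy : pdy I₃ x y = -(2 * x * y + 3 * a) / (30 * y ^ 4) := by
    have heq : (fun t => I₃ x t) = fun t => (2 * t ^ 3 + x * t + a) / (30 * t ^ 3) := by
      funext t; rw [hI₃]
    rw [pdy, heq]
    have hcube : HasDerivAt (fun t : ℝ => t ^ 3) (3 * y ^ 2) y := by
      simpa using hasDerivAt_pow 3 y
    have hnum : HasDerivAt (fun t : ℝ => 2 * t ^ 3 + x * t + a) (2 * (3 * y ^ 2) + x) y := by
      simpa using ((hcube.const_mul 2).add ((hasDerivAt_id y).const_mul x)).add_const a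
    have hden : HasDerivAt (fun t : ℝ => 30 * t ^ 3) (30 * (3 * y ^ 2)) y :=
      hcube.const_mul 30
    have hden0 : 30 * y ^ 3 ≠ 0 := by positivity
    have h : HasDerivAt (fun t : ℝ => (2 * t ^ 3 + x * t + a) / (30 * t ^ 3)) _ y :=
      hnum.div hden hden0
    rw [h.deriv]
    field_simp
    ring
  have h6 : I₆ x y = (2 * x * y + 3 * a) / (10 * y ^ 3) := by
    rw [hI₆, hB, hA, hN, hpdy]
    field_simp
    ring
  have h9 : I₉ x y = 1 / (2500 * y ^ 6) := by
    rw [hI₉, hξ₁, hξ₂, hN, hpdx]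
    field_simp
    ring
  refine ⟨h6, h9, ?_⟩
  have hsq : Real.sqrt (I₉ x y) = 1 / (50 * y ^ 3) := by
    rw [h9, show (1 : ℝ) / (2500 * y ^ 6) = (1 / (50 * y ^ 3)) ^ 2 by field_simp; ring]
    exact Real.sqrt_sq (by positivity)
  rw [hsq, h6, hI₃]
  field_simp
  ring
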